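/- For every integer l ≥ 1 and every x ∈ [0,1], the Lidstone polynomial Λ_l satisfies Λ_l(x) = (−1)^l · (2/π^{2l+1}) · Σ_{n=1}^{∞} ((−1)^{n+1}/n^{2l+1}) · sin(nπx), where the series converges. -/

import Mathlib

/-- The defining property of the sequence of Lidstone polynomial functions. -/
def LidstoneProp (Λ : ℕ → ℝ → ℝ) : Prop :=
  (∀ l : ℕ, ∃ P : Polynomial ℝ, ∀ x : ℝ, Λ l x = P.eval x) ∧
  (∀ x : ℝ, Λ 0 x = x) ∧
  (∀ l : ℕ, (∀ x : ℝ, iteratedDeriv 2 (Λ (l + 1)) x = Λ l x) ∧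
    Λ (l + 1) 0 = 0 ∧ Λ (l + 1) 1 = 0)

open Polynomial Real
open scoped Nat

/-- The Bernoulli polynomial over `ℝ`. -/
noncomputable def bm (m : ℕ) : Polynomial ℝ :=
  (Polynomial.bernoulli m).map (algebraMap ℚ ℝ)

/-- The substitution polynomial `(1 - X)/2`. -/
noncomputable def qp : Polynomial ℝ := Polynomial.C (2⁻¹ : ℝ) * (1 - Polynomial.X)

/-- Candidate closed form of the Lidstone polynomial in terms of Bernoulli polynomials. -/
noncomputable def lidP (l : ℕ) : Polynomial ℝ :=
  Polynomial.C (-((2:ℝ) ^ (2 * l + 1) / (2 * l + 1)!)) * (bm (2 * l + 1)).comp qp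

lemma lidP_eval (l : ℕ) (x : ℝ) : (lidP l).eval x =
    -((2:ℝ) ^ (2 * l + 1) / (2 * l + 1)!) * bernoulliFun (2 * l + 1) ((1 - x) / 2) := by
  rw [show (1 - x) / 2 = 2⁻¹ * (1 - x) by ring]
  simp only [lidP, bm, qp, eval_mul, eval_C, eval_comp, eval_sub, eval_one, eval_X, bernoulliFun]

lemma lidP_zero_eval (x : ℝ) : (lidP 0).eval x = x := by
  rw [lidP_eval]
  have h1 : bernoulliFun 1 ((1 - x) / 2) = (1 - x) / 2 - 1 / 2 := by
    simp [bernoulliFun, Polynomial.bernoulli, Finset.sum_range_succ, _root_.bernoulli_one]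
    ring
  rw [h1]
  norm_num [Nat.factorial]
  ring

lemma derivative_bm (m : ℕ) :
    Polynomial.derivative (bm (m + 1)) = Polynomial.C ((m : ℝ) + 1) * bm m := by
  rw [bm, bm, derivative_map, Polynomial.derivative_bernoulli_add_one, Polynomial.map_mul]
  congr 1
  rw [Polynomial.map_add, Polynomial.map_natCast, Polynomial.map_one,
    ← Polynomial.C_eq_natCast, ← Polynomial.C_1, ← Polynomial.C_add]

lemma derivative_qp : Polynomial.derivative qp = Polynomial.C (-(2⁻¹ : ℝ)) := by
  rw [qp, derivative_C_mul]
  simp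

lemma deriv_comp_qp (m : ℕ) :
    Polynomial.derivative ((bm (m + 1)).comp qp) =
      Polynomial.C (-(((m : ℝ) + 1) / 2)) * (bm m).comp qp := by
  rw [derivative_comp, derivative_bm, derivative_qp, mul_comp, C_comp, ← mul_assoc, ← C_mul]
  congr 2
  ring

lemma deriv2_lidP (l : ℕ) :
    Polynomial.derivative (Polynomial.derivative (lidP (l + 1))) = lidP l := by
  have hidx : 2 * (l + 1) + 1 = (2 * l + 1) + 1 + 1 := by ring
  rw [lidP, hidx, derivative_C_mul, deriv_comp_qp, derivative_C_mul, derivative_C_mul,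
    deriv_comp_qp, lidP, ← mul_assoc, ← mul_assoc, ← C_mul, ← C_mul]
  congr 2
  have hfac : ((2 * l + 1 + 1 + 1)! : ℝ) =
      ((2 * l + 1 + 1 + 1 : ℕ) : ℝ) * ((2 * l + 1 + 1 : ℕ) : ℝ) * ((2 * l + 1)! : ℝ) := by
    rw [Nat.factorial_succ, Nat.factorial_succ]
    push_cast
    ring
  have hf : ((2 * l + 1)! : ℝ) ≠ 0 := Nat.cast_ne_zero.mpr (Nat.factorial_ne_zero _)
  rw [hfac]
  push_cast
  field_simp
  ring

lemma iteratedDeriv_two_eval (p : Polynomial ℝ) (x : ℝ) :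
    iteratedDeriv 2 (fun y => p.eval y) x =
      (Polynomial.derivative (Polynomial.derivative p)).eval x := by
  have h2 : iteratedDeriv 2 (fun y => p.eval y) =
      deriv (deriv (fun y => p.eval y)) := by
    rw [show (2:ℕ) = 0 + 1 + 1 from rfl, iteratedDeriv_succ, iteratedDeriv_succ,
      iteratedDeriv_zero]
  rw [h2]
  have h1 : deriv (fun y => p.eval y) = fun y => (Polynomial.derivative p).eval y :=
    funext fun y => Polynomial.deriv p
  rw [h1]
  exact Polynomial.deriv _

/-- The Fourier sine series of the candidate polynomial. -/
lemma keyA {l : ℕ} (hl : l ≠ 0) {x : ℝ} (hx : x ∈ Set.Icc (0:ℝ) 1) :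
    HasSum (fun n : ℕ =>
      ((-1 : ℝ) ^ (n + 1 + 1) / ((n : ℝ) + 1) ^ (2 * l + 1)) *
        Real.sin (((n : ℝ) + 1) * Real.pi * x))
      ((-1 : ℝ) ^ (l + 1) * (2 * π) ^ (2 * l + 1) / 2 / (2 * l + 1)! *
        bernoulliFun (2 * l + 1) ((1 - x) / 2)) := by
  obtain ⟨hx0, hx1⟩ := hx
  have hy : (1 - x) / 2 ∈ Set.Icc (0:ℝ) 1 := ⟨by linarith, by linarith⟩
  have h := hasSum_one_div_nat_pow_mul_sin hl hy
  have hsum0 : ∑ i ∈ Finset.range 1,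
      (1 / (i : ℝ) ^ (2 * l + 1) * Real.sin (2 * π * i * ((1 - x) / 2))) = 0 := by
    simp
  have h2 := (hasSum_nat_add_iff (f := fun n : ℕ =>
      1 / (n : ℝ) ^ (2 * l + 1) * Real.sin (2 * π * n * ((1 - x) / 2))) 1).mpr
    (by rw [hsum0, add_zero]; exact h)
  have hfun : (fun n : ℕ =>
      ((-1 : ℝ) ^ (n + 1 + 1) / ((n : ℝ) + 1) ^ (2 * l + 1)) *
        Real.sin (((n : ℝ) + 1) * π * x))
      = fun n : ℕ => 1 / ((n + 1 : ℕ) : ℝ) ^ (2 * l + 1) *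
          Real.sin (2 * π * ((n + 1 : ℕ) : ℝ) * ((1 - x) / 2)) := by
    funext n
    have harg : 2 * π * ((n + 1 : ℕ) : ℝ) * ((1 - x) / 2)
        = ((n + 1 : ℕ) : ℝ) * π - ((n : ℝ) + 1) * π * x := by push_cast; ring
    rw [harg, Real.sin_nat_mul_pi_sub]
    push_cast
    rw [pow_succ]
    ring
  rw [hfun]
  exact h2

/-- The algebraic relation between the candidate polynomial and the sum of the series. -/
lemma keyB (l : ℕ) (x : ℝ) : (lidP l).eval x =
    (-1 : ℝ) ^ l * (2 / π ^ (2 * l + 1)) *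
      ((-1 : ℝ) ^ (l + 1) * (2 * π) ^ (2 * l + 1) / 2 / (2 * l + 1)! *
        bernoulliFun (2 * l + 1) ((1 - x) / 2)) := by
  rw [lidP_eval]
  have h1 : ((-1 : ℝ)) ^ l * (-1) ^ l = 1 := by
    rw [← pow_add]
    exact Even.neg_one_pow ⟨l, rfl⟩
  have hπ : (π : ℝ) ≠ 0 := Real.pi_ne_zero
  have hf : ((2 * l + 1)! : ℝ) ≠ 0 := Nat.cast_ne_zero.mpr (Nat.factorial_ne_zero _)
  field_simp
  linear_combination (2 * (2:ℝ) ^ (2 * l) * π ^ (2 * l + 1) *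
    bernoulliFun (2 * l + 1) ((1 - x) / 2)) * h1

lemma lidP_eval_zero {l : ℕ} (hl : l ≠ 0) : (lidP l).eval 0 = 0 := by
  have h := keyA hl (show (0:ℝ) ∈ Set.Icc (0:ℝ) 1 by constructor <;> norm_num)
  have hz : (fun n : ℕ =>
      ((-1 : ℝ) ^ (n + 1 + 1) / ((n : ℝ) + 1) ^ (2 * l + 1)) *
        Real.sin (((n : ℝ) + 1) * π * 0)) = fun _ => (0:ℝ) := by
    funext n; simp
  rw [hz] at h
  have := h.unique hasSum_zero
  rw [keyB, this, mul_zero]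

lemma lidP_eval_one {l : ℕ} (hl : l ≠ 0) : (lidP l).eval 1 = 0 := by
  have h := keyA hl (show (1:ℝ) ∈ Set.Icc (0:ℝ) 1 by constructor <;> norm_num)
  have hz : (fun n : ℕ =>
      ((-1 : ℝ) ^ (n + 1 + 1) / ((n : ℝ) + 1) ^ (2 * l + 1)) *
        Real.sin (((n : ℝ) + 1) * π * 1)) = fun _ => (0:ℝ) := by
    funext n
    have : ((n : ℝ) + 1) * π * 1 = ((n + 1 : ℕ) : ℝ) * π := by push_cast; ring
    rw [this, Real.sin_nat_mul_pi, mul_zero]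
  rw [hz] at h
  have := h.unique hasSum_zero
  rw [keyB, this, mul_zero]

/-- Uniqueness: any sequence satisfying `LidstoneProp` agrees with `lidP`. -/
lemma lid_unique (Λ : ℕ → ℝ → ℝ) (hΛ : LidstoneProp Λ) :
    ∀ l x, Λ l x = (lidP l).eval x := by
  intro l
  induction l with
  | zero => intro x; rw [hΛ.2.1 x, lidP_zero_eval]
  | succ l ih =>
    obtain ⟨P, hP⟩ := hΛ.1 (l + 1)
    have hbd := hΛ.2.2 l
    have hΛfun : Λ (l + 1) = fun y => P.eval y := funext hP
    have hdd : ∀ y : ℝ, (Polynomial.derivative (Polynomial.derivative P)).eval y =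
        (Polynomial.derivative (Polynomial.derivative (lidP (l + 1)))).eval y := by
      intro y
      have h1 : iteratedDeriv 2 (Λ (l + 1)) y =
          (Polynomial.derivative (Polynomial.derivative P)).eval y := by
        rw [hΛfun, iteratedDeriv_two_eval]
      rw [← h1, hbd.1 y, ih y, deriv2_lidP]
    have hpq : Polynomial.derivative (Polynomial.derivative P) =
        Polynomial.derivative (Polynomial.derivative (lidP (l + 1))) :=
      Polynomial.funext hdd
    set D := P - lidP (l + 1) with hD
    have hD2 : Polynomial.derivative (Polynomial.derivative D) = 0 := by
      rw [hD, derivative_sub, derivative_sub, hpq, sub_self]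
    have hD1 : Polynomial.derivative D = Polynomial.C ((Polynomial.derivative D).coeff 0) :=
      eq_C_of_derivative_eq_zero hD2
    set a := (Polynomial.derivative D).coeff 0 with ha
    have hD0 : Polynomial.derivative (D - Polynomial.C a * Polynomial.X) = 0 := by
      rw [derivative_sub, derivative_C_mul_X, ← hD1, sub_self]
    have hDeq : D = Polynomial.C a * Polynomial.X +
        Polynomial.C ((D - Polynomial.C a * Polynomial.X).coeff 0) := by
      have := eq_C_of_derivative_eq_zero hD0
      linear_combination (norm := ring_nf) this
    set b := (D - Polynomial.C a * Polynomial.X).coeff 0 with hb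
    have hev0 : D.eval 0 = 0 := by
      rw [hD, eval_sub, ← hP 0, hbd.2.1, lidP_eval_zero (Nat.succ_ne_zero l), sub_self]
    have hev1 : D.eval 1 = 0 := by
      rw [hD, eval_sub, ← hP 1, hbd.2.2, lidP_eval_one (Nat.succ_ne_zero l), sub_self]
    have hb0 : b = 0 := by
      have := hev0
      rw [hDeq] at this
      simpa using this
    have ha0 : a = 0 := by
      have := hev1
      rw [hDeq, hb0] at this
      simpa using this
    have hDzero : D = 0 := by rw [hDeq, ha0, hb0]; simp
    have hPeq : P = lidP (l + 1) := by
      have := sub_eq_zero.mp hDzero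
      exact this
    intro x
    rw [hP x, hPeq]

theorem lidstone_polynomial_sine_series (Λ : ℕ → ℝ → ℝ) (hΛ : LidstoneProp Λ)
    (l : ℕ) (hl : 1 ≤ l) (x : ℝ) (hx : x ∈ Set.Icc (0 : ℝ) 1) :
    Summable (fun n : ℕ =>
      ((-1 : ℝ) ^ (n + 1 + 1) / ((n : ℝ) + 1) ^ (2 * l + 1)) *
        Real.sin (((n : ℝ) + 1) * Real.pi * x)) ∧
    Λ l x = (-1 : ℝ) ^ l * (2 / Real.pi ^ (2 * l + 1)) *
      ∑' n : ℕ, ((-1 : ℝ) ^ (n + 1 + 1) / ((n : ℝ) + 1) ^ (2 * l + 1)) *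
        Real.sin (((n : ℝ) + 1) * Real.pi * x) := by
  have hl0 : l ≠ 0 := by omega
  have h := keyA hl0 hx
  refine ⟨h.summable, ?_⟩
  rw [lid_unique Λ hΛ l x, h.tsum_eq, keyB]
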